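/- Let γ > 0, k̄, l̄ ≥ 0, let T = {(x,y) : 0 ≤ y ≤ x ≤ 1}, let k, l : T → ℝ be measurable with |k| ≤ k̄ and |l| ≤ l̄ on T, and let w ∈ L²(0,1). Define u(x) = w(x) + ∫₀^x l(x,y) w(y) dy, ψ(x) = w(x) − ∫_x^1 k(y,x) w(y) dy, and φ(x) = γ·u(x)·ψ(x)/(1 + ‖w‖²), where ‖w‖² = ∫₀¹ w(x)² dx. Then ∫₀¹ |φ(x)| dx ≤ γ·(1 + l̄)·(1 + k̄). -/

import Mathlib

open MeasureTheory

/-- The triangle `T = {(x,y) : 0 ≤ y ≤ x ≤ 1}`. -/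
def Ttri : Set (ℝ × ℝ) := {p | 0 ≤ p.2 ∧ p.2 ≤ p.1 ∧ p.1 ≤ 1}

/-- Bound on the (unprojected) adaptive update law
`φ(x) = γ u(x) ψ(x) / (1 + ‖w‖²)` with
`u(x) = w(x) + ∫₀ˣ l(x,y) w(y) dy`, `ψ(x) = w(x) - ∫ₓ¹ k(y,x) w(y) dy`:
`∫₀¹ |φ| ≤ γ (1 + l̄)(1 + k̄)`. -/
theorem update_law_L1_bound (γ kBar lBar : ℝ)
    (hγ : 0 < γ) (hkBar : 0 ≤ kBar) (hlBar : 0 ≤ lBar)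
    (k l : ℝ × ℝ → ℝ) (hk_meas : Measurable k) (hl_meas : Measurable l)
    (hk_bnd : ∀ p ∈ Ttri, |k p| ≤ kBar)
    (hl_bnd : ∀ p ∈ Ttri, |l p| ≤ lBar)
    (w : ℝ → ℝ) (hw : MemLp w 2 (volume.restrict (Set.Ioc (0:ℝ) 1)))
    (u ψ φ : ℝ → ℝ)
    (hu : ∀ x, u x = w x + ∫ y in (0:ℝ)..x, l (x, y) * w y)
    (hψ : ∀ x, ψ x = w x - ∫ y in x..(1:ℝ), k (y, x) * w y)
    (hφ : ∀ x, φ x = γ * u x * ψ x / (1 + ∫ t in (0:ℝ)..1, w t ^ 2)) :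
    IntervalIntegrable φ volume 0 1 ∧
    (∫ x in (0:ℝ)..1, |φ x|) ≤ γ * (1 + lBar) * (1 + kBar) := by
  set μ := volume.restrict (Set.Ioc (0:ℝ) 1) with hμ
  have hfin : IsFiniteMeasure μ := by
    constructor
    rw [hμ, Measure.restrict_apply_univ]
    exact measure_Ioc_lt_top
  -- measurable representative
  obtain ⟨g, hg_sm, hg_ae⟩ := hw.1
  have hg_meas : Measurable g := hg_sm.measurable
  have hwg : ∀ᵐ y ∂volume, y ∈ Set.Ioc (0:ℝ) 1 → w y = g y :=
    (ae_restrict_iff' measurableSet_Ioc).1 hg_ae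
  set A := ∫ y in Set.Ioc (0:ℝ) 1, |w y| with hA
  set W2 := ∫ t in (0:ℝ)..1, w t ^ 2 with hW2
  have hW2set : W2 = ∫ t in Set.Ioc (0:ℝ) 1, w t ^ 2 := by
    rw [hW2, intervalIntegral.integral_of_le zero_le_one]
  have hW2_nonneg : 0 ≤ W2 := by
    rw [hW2set]; exact setIntegral_nonneg measurableSet_Ioc fun x _ => sq_nonneg _
  have hden : (0:ℝ) < 1 + W2 := by linarith
  -- integrability of w, |w|, w^2 on (0,1]
  have hw_int : Integrable w μ := hw.integrable one_le_two
  have habs_on : IntegrableOn (fun y => |w y|) (Set.Ioc (0:ℝ) 1) volume := hw_int.abs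
  have habs_int : Integrable (fun y => |w y|) μ := hw_int.abs
  have hsq_int : Integrable (fun y => w y ^ 2) μ := hw.integrable_sq
  have hA_nonneg : 0 ≤ A :=
    setIntegral_nonneg measurableSet_Ioc fun x _ => abs_nonneg _
  -- Cauchy–Schwarz: A^2 ≤ W2
  have hconj : Real.HolderConjugate 2 2 := Real.HolderConjugate.two_two
  have hCS : A ≤ W2 ^ ((1:ℝ)/2) := by
    have h1 : MemLp (fun y => |w y|) (ENNReal.ofReal 2) μ := by
      have := hw.norm
      simpa [Real.norm_eq_abs, ENNReal.ofReal_ofNat] using this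
    have h2 : MemLp (fun _ : ℝ => (1:ℝ)) (ENNReal.ofReal 2) μ := memLp_const 1
    have hle := integral_mul_le_Lp_mul_Lq_of_nonneg hconj
      (Filter.Eventually.of_forall fun y => abs_nonneg (w y))
      (Filter.Eventually.of_forall fun _ => zero_le_one) h1 h2
    simp only [mul_one] at hle
    have e1 : ∫ a, |w a| ^ (2:ℝ) ∂μ = ∫ a, w a ^ 2 ∂μ := by
      refine integral_congr_ae (Filter.Eventually.of_forall fun a => ?_)
      simp only [Real.rpow_two, sq_abs]
    have e2 : ∫ a, (1:ℝ) ^ (2:ℝ) ∂μ = 1 := by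
      simp [Real.one_rpow, hμ, Real.volume_Ioc]
    rw [e1, e2, Real.one_rpow] at hle
    calc A = ∫ y, |w y| ∂μ := rfl
      _ ≤ (∫ y, w y ^ 2 ∂μ) ^ ((1:ℝ)/2) * 1 := hle
      _ = W2 ^ ((1:ℝ)/2) := by rw [mul_one, hW2set]
  have hA2 : A * A ≤ W2 := by
    have hmm := mul_le_mul hCS hCS hA_nonneg (Real.rpow_nonneg hW2_nonneg _)
    calc A * A ≤ W2 ^ ((1:ℝ)/2) * W2 ^ ((1:ℝ)/2) := hmm
      _ = W2 := by
        rw [← Real.rpow_add' hW2_nonneg (by norm_num)]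
        norm_num
  -- pointwise bounds on the kernel integrals
  have hF_bnd : ∀ x ∈ Set.Ioc (0:ℝ) 1, |∫ y in (0:ℝ)..x, l (x, y) * w y| ≤ lBar * A := by
    intro x hx
    rw [intervalIntegral.integral_of_le hx.1.le]
    have hsub : Set.Ioc (0:ℝ) x ⊆ Set.Ioc (0:ℝ) 1 :=
      Set.Ioc_subset_Ioc le_rfl hx.2
    have hgint : Integrable (fun y => lBar * |w y|) (volume.restrict (Set.Ioc (0:ℝ) x)) :=
      ((habs_on.mono_set hsub).const_mul lBar)
    have hbd : ∀ᵐ y ∂volume.restrict (Set.Ioc (0:ℝ) x),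
        ‖l (x, y) * w y‖ ≤ lBar * |w y| := by
      rw [ae_restrict_iff' measurableSet_Ioc]
      refine Filter.Eventually.of_forall fun y hy => ?_
      have hT : (x, y) ∈ Ttri := ⟨hy.1.le, hy.2, hx.2⟩
      calc ‖l (x, y) * w y‖ = |l (x, y)| * |w y| := abs_mul _ _
        _ ≤ lBar * |w y| := mul_le_mul_of_nonneg_right (hl_bnd _ hT) (abs_nonneg _)
    calc |∫ y in Set.Ioc (0:ℝ) x, l (x, y) * w y| ≤ ∫ y in Set.Ioc (0:ℝ) x, lBar * |w y| :=
        norm_integral_le_of_norm_le hgint hbd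
      _ = lBar * ∫ y in Set.Ioc (0:ℝ) x, |w y| := integral_const_mul _ _
      _ ≤ lBar * A := by
        refine mul_le_mul_of_nonneg_left ?_ hlBar
        refine setIntegral_mono_set habs_int ?_ (HasSubset.Subset.eventuallyLE hsub)
        exact Filter.Eventually.of_forall fun y => abs_nonneg _
  have hH_bnd : ∀ x ∈ Set.Ioc (0:ℝ) 1, |∫ y in x..(1:ℝ), k (y, x) * w y| ≤ kBar * A := by
    intro x hx
    rw [intervalIntegral.integral_of_le hx.2]
    have hsub : Set.Ioc x 1 ⊆ Set.Ioc (0:ℝ) 1 :=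
      Set.Ioc_subset_Ioc hx.1.le le_rfl
    have hgint : Integrable (fun y => kBar * |w y|) (volume.restrict (Set.Ioc x 1)) :=
      ((habs_on.mono_set hsub).const_mul kBar)
    have hbd : ∀ᵐ y ∂volume.restrict (Set.Ioc x 1),
        ‖k (y, x) * w y‖ ≤ kBar * |w y| := by
      rw [ae_restrict_iff' measurableSet_Ioc]
      refine Filter.Eventually.of_forall fun y hy => ?_
      have hT : (y, x) ∈ Ttri := ⟨hx.1.le, hy.1.le, hy.2⟩
      calc ‖k (y, x) * w y‖ = |k (y, x)| * |w y| := abs_mul _ _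
        _ ≤ kBar * |w y| := mul_le_mul_of_nonneg_right (hk_bnd _ hT) (abs_nonneg _)
    calc |∫ y in Set.Ioc x 1, k (y, x) * w y| ≤ ∫ y in Set.Ioc x 1, kBar * |w y| :=
        norm_integral_le_of_norm_le hgint hbd
      _ = kBar * ∫ y in Set.Ioc x 1, |w y| := integral_const_mul _ _
      _ ≤ kBar * A := by
        refine mul_le_mul_of_nonneg_left ?_ hkBar
        refine setIntegral_mono_set habs_int ?_ (HasSubset.Subset.eventuallyLE hsub)
        exact Filter.Eventually.of_forall fun y => abs_nonneg _
  -- pointwise bound for φ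
  set B : ℝ → ℝ := fun x => γ * (|w x| + lBar * A) * (|w x| + kBar * A) / (1 + W2) with hBdef
  have hφ_le : ∀ x ∈ Set.Ioc (0:ℝ) 1, |φ x| ≤ B x := by
    intro x hx
    have hu_le : |u x| ≤ |w x| + lBar * A := by
      rw [hu x]
      exact (abs_add_le _ _).trans (by gcongr; exact hF_bnd x hx)
    have hψ_le : |ψ x| ≤ |w x| + kBar * A := by
      rw [hψ x]
      exact (abs_sub _ _).trans (by gcongr; exact hH_bnd x hx)
    calc |φ x| = γ * |u x| * |ψ x| / (1 + W2) := by
          rw [hφ x, abs_div, abs_of_pos hden, abs_mul, abs_mul, abs_of_pos hγ]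
      _ ≤ γ * (|w x| + lBar * A) * (|w x| + kBar * A) / (1 + W2) := by
          gcongr ?_ / _
          exact mul_le_mul (mul_le_mul_of_nonneg_left hu_le hγ.le) hψ_le (abs_nonneg _)
            (mul_nonneg hγ.le (add_nonneg (abs_nonneg _) (mul_nonneg hlBar hA_nonneg)))
      _ = B x := rfl
  -- integrability of B
  have hB_int : Integrable B μ := by
    have h1 : Integrable (fun x => w x ^ 2 + ((lBar * A + kBar * A) * |w x|
        + (lBar * A) * (kBar * A))) μ :=
      hsq_int.add ((habs_int.const_mul _).add (integrable_const _))
    have h2 : Integrable (fun x => (γ / (1 + W2)) * (w x ^ 2 +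
        ((lBar * A + kBar * A) * |w x| + (lBar * A) * (kBar * A)))) μ := h1.const_mul _
    refine h2.congr (Filter.Eventually.of_forall fun x => ?_)
    simp only [hBdef]
    rw [← sq_abs (w x)]
    ring
  -- a.e. strong measurability of φ
  set Φ₁ : ℝ × ℝ → ℝ := fun p => if p.2 ∈ Set.Ioc (0:ℝ) p.1 then l p * g p.2 else 0
    with hΦ₁def
  have hΦ₁_meas : Measurable Φ₁ := by
    refine Measurable.ite ?_ (hl_meas.mul (hg_meas.comp measurable_snd)) measurable_const
    exact (measurableSet_lt measurable_const measurable_snd).inter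
      (measurableSet_le measurable_snd measurable_fst)
  set G : ℝ → ℝ := fun x => ∫ y, Φ₁ (x, y) with hGdef
  have hG_meas : StronglyMeasurable G :=
    hΦ₁_meas.stronglyMeasurable.integral_prod_right'
  set Φ₂ : ℝ × ℝ → ℝ := fun p => if p.2 ∈ Set.Ioc p.1 (1:ℝ) then k (p.2, p.1) * g p.2 else 0
    with hΦ₂def
  have hΦ₂_meas : Measurable Φ₂ := by
    refine Measurable.ite ?_ ((hk_meas.comp measurable_swap).mul (hg_meas.comp measurable_snd))
      measurable_const
    exact (measurableSet_lt measurable_fst measurable_snd).inter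
      (measurableSet_le measurable_snd measurable_const)
  set H : ℝ → ℝ := fun x => ∫ y, Φ₂ (x, y) with hHdef
  have hH_meas : StronglyMeasurable H :=
    hΦ₂_meas.stronglyMeasurable.integral_prod_right'
  have hG_eq : ∀ x ∈ Set.Ioc (0:ℝ) 1, (∫ y in (0:ℝ)..x, l (x, y) * w y) = G x := by
    intro x hx
    have hsub : Set.Ioc (0:ℝ) x ⊆ Set.Ioc (0:ℝ) 1 := Set.Ioc_subset_Ioc le_rfl hx.2
    rw [intervalIntegral.integral_of_le hx.1.le]
    have step1 : ∫ y in Set.Ioc (0:ℝ) x, l (x, y) * w y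
        = ∫ y in Set.Ioc (0:ℝ) x, l (x, y) * g y := by
      refine setIntegral_congr_ae measurableSet_Ioc ?_
      filter_upwards [hwg] with y hy hy2
      rw [hy (hsub hy2)]
    rw [step1, hGdef, ← integral_indicator measurableSet_Ioc]
    refine integral_congr_ae (Filter.Eventually.of_forall fun y => ?_)
    simp [hΦ₁def, Set.indicator_apply]
  have hH_eq : ∀ x ∈ Set.Ioc (0:ℝ) 1, (∫ y in x..(1:ℝ), k (y, x) * w y) = H x := by
    intro x hx
    have hsub : Set.Ioc x 1 ⊆ Set.Ioc (0:ℝ) 1 := Set.Ioc_subset_Ioc hx.1.le le_rfl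
    rw [intervalIntegral.integral_of_le hx.2]
    have step1 : ∫ y in Set.Ioc x 1, k (y, x) * w y
        = ∫ y in Set.Ioc x 1, k (y, x) * g y := by
      refine setIntegral_congr_ae measurableSet_Ioc ?_
      filter_upwards [hwg] with y hy hy2
      rw [hy (hsub hy2)]
    rw [step1, hHdef, ← integral_indicator measurableSet_Ioc]
    refine integral_congr_ae (Filter.Eventually.of_forall fun y => ?_)
    simp [hΦ₂def, Set.indicator_apply]
  have hφ_eq : φ =ᵐ[μ] fun x => γ * (g x + G x) * (g x - H x) / (1 + W2) := by
    filter_upwards [hg_ae, ae_restrict_mem measurableSet_Ioc] with x hwx hxmem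
    rw [hφ x, hu x, hψ x, hG_eq x hxmem, hH_eq x hxmem, hwx]
  have hφ_aesm : AEStronglyMeasurable φ μ := by
    refine AEStronglyMeasurable.congr ?_ hφ_eq.symm
    exact (((measurable_const.mul (hg_meas.add hG_meas.measurable)).mul
      (hg_meas.sub hH_meas.measurable)).div_const _).aestronglyMeasurable
  -- integrability of φ
  have hφ_bd_ae : ∀ᵐ x ∂μ, ‖φ x‖ ≤ B x := by
    filter_upwards [ae_restrict_mem measurableSet_Ioc] with x hx
    simpa [Real.norm_eq_abs] using hφ_le x hx
  have hφ_int : Integrable φ μ := hB_int.mono' hφ_aesm hφ_bd_ae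
  refine ⟨(intervalIntegrable_iff_integrableOn_Ioc_of_le zero_le_one).2 hφ_int, ?_⟩
  -- the final estimate
  have key : ∫ x in Set.Ioc (0:ℝ) 1, |φ x| ≤ ∫ x, B x ∂μ := by
    refine integral_mono_ae hφ_int.abs hB_int ?_
    filter_upwards [ae_restrict_mem measurableSet_Ioc] with x hx
    exact hφ_le x hx
  have hBval : ∫ x, B x ∂μ = (γ / (1 + W2)) * (W2 + ((lBar * A + kBar * A) * A
      + (lBar * A) * (kBar * A))) := by
    have hBrw : B = fun x => (γ / (1 + W2)) * (w x ^ 2 + ((lBar * A + kBar * A) * |w x|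
        + (lBar * A) * (kBar * A))) := by
      funext x
      simp only [hBdef]
      rw [← sq_abs (w x)]
      ring
    have hi1 : Integrable (fun x => (lBar * A + kBar * A) * |w x|) μ :=
      habs_int.const_mul _
    have hi2 : Integrable (fun _ : ℝ => (lBar * A) * (kBar * A)) μ := integrable_const _
    have hi12 : Integrable (fun x => (lBar * A + kBar * A) * |w x|
        + (lBar * A) * (kBar * A)) μ := hi1.add hi2
    rw [hBrw, integral_const_mul]
    congr 1
    rw [integral_add hsq_int hi12, integral_add hi1 hi2,
      integral_const_mul, integral_const]
    have : μ.real Set.univ = 1 := by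
      simp [hμ, Measure.real, Measure.restrict_apply_univ, Real.volume_Ioc]
    rw [this, hW2set]
    simp [hμ, hA]
  have final : (γ / (1 + W2)) * (W2 + ((lBar * A + kBar * A) * A
      + (lBar * A) * (kBar * A))) ≤ γ * (1 + lBar) * (1 + kBar) := by
    rw [div_mul_eq_mul_div, div_le_iff₀ hden]
    have hfact : (0:ℝ) ≤ (lBar + kBar + lBar * kBar) * (W2 - A * A) :=
      mul_nonneg (by positivity) (sub_nonneg.2 hA2)
    nlinarith [mul_nonneg hlBar hkBar, hγ.le, hW2_nonneg, hA2,
      mul_nonneg hγ.le hfact, mul_nonneg hγ.le hW2_nonneg]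
  calc (∫ x in (0:ℝ)..1, |φ x|) = ∫ x in Set.Ioc (0:ℝ) 1, |φ x| :=
      intervalIntegral.integral_of_le zero_le_one
    _ ≤ ∫ x, B x ∂μ := key
    _ = _ := hBval
    _ ≤ γ * (1 + lBar) * (1 + kBar) := final
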